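/- Let g: [0,∞) → [0,∞) be continuous with ∫_0^∞ g(s)² ds < ∞ and suppose g(t)² = -f'(t) for a C¹ function f satisfying 0 ≤ f(t) ≤ C·t^{-1/(2β-1)} for some β ∈ (1/2,1). Then ∫_0^∞ g(s) ds < ∞. -/

import Mathlib

open MeasureTheory

/-- Let `g : [0,∞) → [0,∞)` be continuous with `∫₀^∞ g(s)² ds < ∞` and suppose
`g(t)² = -f'(t)` for a `C¹` function `f` satisfying `0 ≤ f(t) ≤ C·t^{-1/(2β-1)}` for
some `β ∈ (1/2, 1)`.  Then `∫₀^∞ g(s) ds < ∞`. -/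
theorem stmt_3 (f g : ℝ → ℝ) (β C : ℝ) (hβ : 1 / 2 < β) (hβ1 : β < 1)
    (hf : ContDiff ℝ 1 f) (hg : Continuous g)
    (hgnonneg : ∀ s : ℝ, 0 ≤ s → 0 ≤ g s)
    (hgsq : IntegrableOn (fun s => g s ^ 2) (Set.Ici (0 : ℝ)))
    (hrel : ∀ t : ℝ, 0 ≤ t → g t ^ 2 = -(deriv f t))
    (hfnonneg : ∀ t : ℝ, 0 ≤ t → 0 ≤ f t)
    (hdecay : ∀ t : ℝ, 1 ≤ t → f t ≤ C * t ^ (-(1 / (2 * β - 1)))) :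
    IntegrableOn g (Set.Ici (0 : ℝ)) := by
  have h2β : 0 < 2 * β - 1 := by linarith
  set r : ℝ := 1 / (2 * β - 1) with hrdef
  have hr1 : 1 < r := by
    rw [hrdef, lt_div_iff₀ h2β]; linarith
  set p : ℝ := (r + 1) / 2 with hpdef
  have hp1 : 1 < p := by rw [hpdef]; linarith
  have hp0 : 0 < p := by linarith
  have hCnn : 0 ≤ C := by
    have h1 := hdecay 1 le_rfl
    rw [Real.one_rpow, mul_one] at h1
    linarith [hfnonneg 1 zero_le_one]
  -- continuity of power functions
  have hcp : Continuous fun s : ℝ => s ^ p := Real.continuous_rpow_const hp0.le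
  have hcp1 : Continuous fun s : ℝ => s ^ (p - 1) :=
    Real.continuous_rpow_const (by linarith)
  have hcderiv : Continuous (deriv f) := hf.continuous_deriv le_rfl
  -- integrability of s ^ (-p) on Ioi 1
  have hIp : IntegrableOn (fun s : ℝ => s ^ (-p)) (Set.Ioi 1) :=
    integrableOn_Ioi_rpow_of_lt (by linarith) one_pos
  set Ifull : ℝ := ∫ s in Set.Ioi (1 : ℝ), s ^ (-p) with hIfull
  have hIfull_nonneg : 0 ≤ Ifull :=
    setIntegral_nonneg measurableSet_Ioi fun x hx => Real.rpow_nonneg (zero_lt_one.trans hx).le _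
  -- key uniform bound on ∫_1^T g² s^p
  have key : ∀ T : ℝ, 1 ≤ T →
      (∫ s in (1 : ℝ)..T, g s ^ 2 * s ^ p) ≤ f 1 + p * (C * Ifull) := by
    intro T hT
    have huIcc : Set.uIcc (1 : ℝ) T = Set.Icc 1 T := Set.uIcc_of_le hT
    have hu : ∀ x ∈ Set.uIcc (1 : ℝ) T, HasDerivAt f (deriv f x) x := fun x _ =>
      (hf.differentiable one_ne_zero x).hasDerivAt
    have hv : ∀ x ∈ Set.uIcc (1 : ℝ) T,
        HasDerivAt (fun s : ℝ => s ^ p) (p * x ^ (p - 1)) x := by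
      intro x hx
      rw [huIcc] at hx
      exact Real.hasDerivAt_rpow_const (Or.inl (by linarith [hx.1] : x ≠ 0))
    have hu' : IntervalIntegrable (deriv f) volume 1 T :=
      hcderiv.intervalIntegrable 1 T
    have hv' : IntervalIntegrable (fun x : ℝ => p * x ^ (p - 1)) volume 1 T :=
      (continuous_const.mul hcp1).intervalIntegrable 1 T
    have ibp := intervalIntegral.integral_deriv_mul_eq_sub hu hv hu' hv'
    -- split the integral of the sum
    have hint1 : IntervalIntegrable (fun x => deriv f x * x ^ p) volume 1 T :=
      (hcderiv.mul hcp).intervalIntegrable 1 T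
    have hint2 : IntervalIntegrable (fun x => f x * (p * x ^ (p - 1))) volume 1 T :=
      (hf.continuous.mul (continuous_const.mul hcp1)).intervalIntegrable 1 T
    rw [intervalIntegral.integral_add hint1 hint2] at ibp
    have heq : (∫ s in (1 : ℝ)..T, g s ^ 2 * s ^ p)
        = -(∫ x in (1 : ℝ)..T, deriv f x * x ^ p) := by
      rw [← intervalIntegral.integral_neg]
      apply intervalIntegral.integral_congr
      intro x hx
      rw [huIcc] at hx
      have hx0 : (0 : ℝ) ≤ x := by linarith [hx.1]
      simp [hrel x hx0, neg_mul]
    have h1p : (1 : ℝ) ^ p = 1 := Real.one_rpow p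
    -- bound the remaining integral
    have hmono : (∫ x in (1 : ℝ)..T, f x * (p * x ^ (p - 1)))
        ≤ ∫ x in (1 : ℝ)..T, p * C * x ^ (-p) := by
      have hii : IntervalIntegrable (fun x : ℝ => x ^ (-p)) volume 1 T := by
        apply intervalIntegral.intervalIntegrable_rpow
        right
        rw [Set.uIcc_of_le hT]
        intro h
        exact absurd h.1 (by norm_num)
      apply intervalIntegral.integral_mono_on hT hint2 (hii.const_mul (p * C))
      intro x hx
      have hx1 : (1 : ℝ) ≤ x := hx.1
      have hx0 : (0 : ℝ) < x := by linarith
      have hb : f x ≤ C * x ^ (-r) := hdecay x hx1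
      have hpw : x ^ (-r) * x ^ (p - 1) = x ^ (-p) := by
        rw [← Real.rpow_add hx0]; ring_nf
        rw [show -1 - r + p = -p by rw [hpdef]; ring]
      have hpow_nonneg : 0 ≤ p * x ^ (p - 1) := mul_nonneg hp0.le (Real.rpow_nonneg hx0.le _)
      calc f x * (p * x ^ (p - 1)) ≤ C * x ^ (-r) * (p * x ^ (p - 1)) :=
            mul_le_mul_of_nonneg_right hb hpow_nonneg
        _ = p * C * (x ^ (-r) * x ^ (p - 1)) := by ring
        _ = p * C * x ^ (-p) := by rw [hpw]
    have htail : (∫ x in (1 : ℝ)..T, x ^ (-p)) ≤ Ifull := by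
      rw [intervalIntegral.integral_of_le hT]
      apply setIntegral_mono_set hIp
      · filter_upwards [ae_restrict_mem measurableSet_Ioi] with x hx using
          Real.rpow_nonneg (zero_lt_one.trans hx).le _
      · exact Filter.Eventually.of_forall Set.Ioc_subset_Ioi_self
    have hfT : 0 ≤ f T * T ^ p :=
      mul_nonneg (hfnonneg T (by linarith)) (Real.rpow_nonneg (by linarith) _)
    have hconst : (∫ x in (1 : ℝ)..T, p * C * x ^ (-p)) = p * C * ∫ x in (1:ℝ)..T, x ^ (-p) := by
      rw [← intervalIntegral.integral_const_mul]
    have hpC : 0 ≤ p * C := mul_nonneg hp0.le hCnn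
    calc (∫ s in (1 : ℝ)..T, g s ^ 2 * s ^ p)
        = -(∫ x in (1 : ℝ)..T, deriv f x * x ^ p) := heq
      _ = f 1 * 1 ^ p - f T * T ^ p + ∫ x in (1 : ℝ)..T, f x * (p * x ^ (p - 1)) := by
          linarith [ibp]
      _ ≤ f 1 + ∫ x in (1 : ℝ)..T, f x * (p * x ^ (p - 1)) := by
          rw [h1p, mul_one]; linarith
      _ ≤ f 1 + p * C * ∫ x in (1 : ℝ)..T, x ^ (-p) := by
          rw [← hconst]; linarith
      _ ≤ f 1 + p * (C * Ifull) := by nlinarith [mul_le_mul_of_nonneg_left htail hpC]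
  -- integrability of g² s^p on Ioi 1
  have hGcont : Continuous fun s : ℝ => g s ^ 2 * s ^ p := (hg.pow 2).mul hcp
  have hGint : IntegrableOn (fun s => g s ^ 2 * s ^ p) (Set.Ioi 1) := by
    apply integrableOn_Ioi_of_intervalIntegral_norm_bounded (f 1 + p * (C * Ifull)) 1
      (b := fun n : ℕ => 1 + n) (l := Filter.atTop)
    · intro n
      exact (hGcont.integrableOn_Icc).mono_set Set.Ioc_subset_Icc_self
    · exact Filter.tendsto_atTop_add_const_left _ _ (tendsto_natCast_atTop_atTop)
    · filter_upwards with n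
      have hT : (1 : ℝ) ≤ 1 + n := le_add_of_nonneg_right (Nat.cast_nonneg n)
      have : (∫ x in (1:ℝ)..(1 + n), ‖g x ^ 2 * x ^ p‖)
          = ∫ x in (1:ℝ)..(1 + n), g x ^ 2 * x ^ p := by
        apply intervalIntegral.integral_congr
        intro x hx
        rw [Set.uIcc_of_le hT] at hx
        have hx0 : (0 : ℝ) ≤ x := by linarith [hx.1]
        simp only [Real.norm_eq_abs]
        exact abs_of_nonneg (mul_nonneg (sq_nonneg _) (Real.rpow_nonneg hx0 p))
      rw [this]
      exact key _ hT
  -- g integrable on Ioi 1 by domination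
  have hg1 : IntegrableOn g (Set.Ioi 1) := by
    have hbound : IntegrableOn
        (fun s => (g s ^ 2 * s ^ p + s ^ (-p)) / 2) (Set.Ioi 1) :=
      (hGint.add hIp).div_const 2
    apply hbound.integrable.mono' (hg.aestronglyMeasurable.restrict)
    filter_upwards [ae_restrict_mem measurableSet_Ioi] with s hs
    have hs1 : (1 : ℝ) < s := hs
    have hs0 : (0 : ℝ) < s := by linarith
    have hgn : 0 ≤ g s := hgnonneg s hs0.le
    rw [Real.norm_eq_abs, abs_of_nonneg hgn]
    have hab : 2 * (g s * s ^ (p / 2)) * s ^ (-(p / 2))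
        ≤ (g s * s ^ (p / 2)) ^ 2 + (s ^ (-(p / 2))) ^ 2 := two_mul_le_add_sq _ _
    have h1 : 2 * (g s * s ^ (p / 2)) * s ^ (-(p / 2)) = 2 * g s := by
      rw [mul_assoc, mul_assoc, ← Real.rpow_add hs0]
      simp
    have h2 : (g s * s ^ (p / 2)) ^ 2 = g s ^ 2 * s ^ p := by
      rw [mul_pow, ← Real.rpow_natCast (s ^ (p / 2)) 2, ← Real.rpow_mul hs0.le]
      norm_num
    have h3 : (s ^ (-(p / 2))) ^ 2 = s ^ (-p) := by
      rw [← Real.rpow_natCast (s ^ (-(p / 2))) 2, ← Real.rpow_mul hs0.le]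
      norm_num
    rw [h1, h2, h3] at hab
    linarith
  -- combine
  have hsplit : Set.Ici (0 : ℝ) = Set.Icc 0 1 ∪ Set.Ioi 1 := by
    rw [Set.Icc_union_Ioi_eq_Ici zero_le_one]
  rw [hsplit]
  exact (hg.integrableOn_Icc).union hg1
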